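/- Let n ≥ 3, 2 ≤ i_1 ≤ n−2, t_2 = i_1 + 1, i_2 = n − i_1 − 1 (so i_2 + t_2 = n and i_1 + 1 + i_2 = n). Define C_1 = ... = C_{i_1} = [n] \ {i_1+2,...,n}, C_{i_1+1} = ... = C_{n−1} = [n] \ [i_1], C_n = [n]. Then {Σ_{k=1}^n e_{j_k} : j_k ∈ C_k} = {α ∈ ℕ^n : |α| = n, α_1 + ... + α_{i_1} ≤ i_1 + 1, α_{i_1+2} + ... + α_n ≤ n − i_1}. -/

import Mathlib

def Spre (n : ℕ) (α : Fin n → ℕ) (v : ℕ) : ℕ :=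
  ∑ m ∈ Finset.univ.filter (fun m : Fin n => m.val < v), α m

def gpre (n : ℕ) (α : Fin n → ℕ) (p : ℕ) : ℕ :=
  Nat.findGreatest (fun v => Spre n α v ≤ p) n

lemma Spre_mono (n : ℕ) (α : Fin n → ℕ) : Monotone (Spre n α) := by
  intro u v huv
  apply Finset.sum_le_sum_of_subset
  intro m hm
  simp only [Finset.mem_filter, Finset.mem_univ, true_and] at hm ⊢
  omega

lemma Spre_zero (n : ℕ) (α : Fin n → ℕ) : Spre n α 0 = 0 := by
  simp [Spre]

lemma Spre_succ (n : ℕ) (α : Fin n → ℕ) (v : ℕ) (hv : v < n) :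
    Spre n α (v + 1) = Spre n α v + α ⟨v, hv⟩ := by
  unfold Spre
  have h : Finset.univ.filter (fun m : Fin n => m.val < v + 1) =
      insert (⟨v, hv⟩ : Fin n) (Finset.univ.filter (fun m : Fin n => m.val < v)) := by
    ext m
    simp only [Finset.mem_filter, Finset.mem_univ, true_and, Finset.mem_insert, Fin.ext_iff]
    omega
  rw [h, Finset.sum_insert (by simp)]
  omega

lemma Spre_top (n : ℕ) (α : Fin n → ℕ) (hsum : ∑ k, α k = n) : Spre n α n = n := by
  unfold Spre
  rw [Finset.filter_true_of_mem (fun m _ => m.isLt)]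
  exact hsum

lemma gpre_spec (n : ℕ) (α : Fin n → ℕ) (p : ℕ) : Spre n α (gpre n α p) ≤ p :=
  Nat.findGreatest_spec (P := fun v => Spre n α v ≤ p) (Nat.zero_le n) (by simp [Spre_zero])

lemma gpre_lt (n : ℕ) (α : Fin n → ℕ) (hsum : ∑ k, α k = n) (p : ℕ) (hp : p < n) :
    gpre n α p < n := by
  have h1 : gpre n α p ≤ n := Nat.findGreatest_le n
  have h2 := gpre_spec n α p
  rcases eq_or_lt_of_le h1 with h | h
  · rw [h, Spre_top n α hsum] at h2; omega
  · exact h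

lemma gpre_eq_iff (n : ℕ) (α : Fin n → ℕ) (hsum : ∑ k, α k = n) (p : ℕ) (hp : p < n)
    (m : ℕ) (hm : m < n) :
    gpre n α p = m ↔ Spre n α m ≤ p ∧ p < Spre n α (m + 1) := by
  constructor
  · intro h
    have h2 := gpre_spec n α p
    rw [h] at h2
    refine ⟨h2, ?_⟩
    by_contra hle
    push_neg at hle
    have := Nat.le_findGreatest (P := fun v => Spre n α v ≤ p) (by omega : m + 1 ≤ n) hle
    simp only [gpre] at h
    omega
  · rintro ⟨h1, h2⟩
    have hle : m ≤ gpre n α p := Nat.le_findGreatest (by omega) h1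
    rcases eq_or_lt_of_le hle with h | h
    · omega
    · exfalso
      have hs := gpre_spec n α p
      have := Spre_mono n α (show m + 1 ≤ gpre n α p by omega)
      omega

lemma aux_card_Ico (n a b : ℕ) (hb : b ≤ n) :
    (Finset.univ.filter (fun p : Fin n => a ≤ p.val ∧ p.val < b)).card = b - a := by
  have h : (Finset.univ.filter (fun p : Fin n => a ≤ p.val ∧ p.val < b)) =
      (Finset.Ico a b).attachFin (fun m hm => lt_of_lt_of_le (Finset.mem_Ico.mp hm).2 hb) := by
    ext p
    simp [Finset.mem_attachFin, Finset.mem_Ico]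
  rw [h, Finset.card_attachFin, Nat.card_Ico]

lemma aux_card_lt (n b : ℕ) (hb : b ≤ n) :
    (Finset.univ.filter (fun p : Fin n => p.val < b)).card = b := by
  have := aux_card_Ico n 0 b hb
  simpa using this

lemma aux_card_ge (n a : ℕ) :
    (Finset.univ.filter (fun p : Fin n => a ≤ p.val)).card = n - a := by
  have h := aux_card_Ico n a n le_rfl
  have he : (Finset.univ.filter (fun p : Fin n => a ≤ p.val ∧ p.val < n)) =
      (Finset.univ.filter (fun p : Fin n => a ≤ p.val)) := by
    ext p; simp [p.isLt]
  rwa [he] at h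

lemma gpre_card (n : ℕ) (α : Fin n → ℕ) (hsum : ∑ k, α k = n) (m : Fin n) :
    (Finset.univ.filter (fun p : Fin n => gpre n α p.val = m.val)).card = α m := by
  have h : Finset.univ.filter (fun p : Fin n => gpre n α p.val = m.val) =
      Finset.univ.filter (fun p : Fin n =>
        Spre n α m.val ≤ p.val ∧ p.val < Spre n α (m.val + 1)) := by
    ext p
    simp only [Finset.mem_filter, Finset.mem_univ, true_and]
    exact gpre_eq_iff n α hsum p.val p.isLt m.val m.isLt
  rw [h, aux_card_Ico]
  · rw [Spre_succ n α m.val m.isLt]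
    have hem : (⟨m.1, m.isLt⟩ : Fin n) = m := rfl
    rw [hem]
    omega
  · have := Spre_mono n α (show m.val + 1 ≤ n from m.isLt)
    rw [Spre_top n α hsum] at this
    exact this

lemma sum_single_apply {n : ℕ} (j : Fin n → Fin n) (m : Fin n) :
    (∑ k, (Pi.single (j k) 1 : Fin n → ℕ)) m = (Finset.univ.filter (fun k => j k = m)).card := by
  rw [Finset.sum_apply, Finset.card_filter]
  simp [Pi.single_apply, eq_comm]

def fFun (n : ℕ) (α : Fin n → ℕ) (hsum : ∑ k, α k = n) : Fin n → Fin n :=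
  fun p => ⟨gpre n α p.val, gpre_lt n α hsum p.val p.isLt⟩

lemma fFun_count (n : ℕ) (α : Fin n → ℕ) (hsum : ∑ k, α k = n) :
    α = ∑ p, Pi.single (fFun n α hsum p) 1 := by
  funext m
  rw [sum_single_apply]
  rw [← gpre_card n α hsum m]
  congr 1
  ext p
  simp [fFun, Fin.ext_iff]

def sigmaFun (n i1 : ℕ) (hn : i1 < n) : Fin n → Fin n := fun k =>
  if k.val < i1 then k else if h : k.val + 1 < n then ⟨k.val + 1, h⟩ else ⟨i1, hn⟩

lemma sigma_inj (n i1 : ℕ) (hn : i1 < n) : Function.Injective (sigmaFun n i1 hn) := by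
  intro a b hab
  have ha := a.isLt
  have hb := b.isLt
  unfold sigmaFun at hab
  rw [Fin.ext_iff]
  split_ifs at hab <;> rw [Fin.ext_iff] at hab <;> simp_all <;> omega

lemma backward (n i1 : ℕ) (hn2 : i1 + 2 ≤ n) (α : Fin n → ℕ)
    (h1 : ∑ k, α k = n)
    (h2 : ∑ k ∈ Finset.univ.filter (fun m : Fin n => m.val < i1), α k ≤ i1 + 1)
    (h3 : ∑ k ∈ Finset.univ.filter (fun m : Fin n => i1 + 1 ≤ m.val), α k ≤ n - i1) :
    ∃ j : Fin n → Fin n,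
      (∀ k : Fin n, (k.val < i1 → (j k).val < i1 + 1) ∧
        (i1 ≤ k.val → k.val < n - 1 → i1 ≤ (j k).val)) ∧
      α = ∑ k, Pi.single (j k) 1 := by
  have hn : i1 < n := by omega
  have hA : Spre n α i1 ≤ i1 + 1 := h2
  have hB : Spre n α (i1 + 1) + ∑ k ∈ Finset.univ.filter (fun m : Fin n => i1 + 1 ≤ m.val), α k
      = n := by
    have hsplit := Finset.sum_filter_add_sum_filter_not Finset.univ
      (fun m : Fin n => m.val < i1 + 1) α
    have he : Finset.univ.filter (fun m : Fin n => ¬ m.val < i1 + 1) =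
        Finset.univ.filter (fun m : Fin n => i1 + 1 ≤ m.val) := by
      ext m; simp
    rw [he, h1] at hsplit
    exact hsplit
  have hBge : i1 ≤ Spre n α (i1 + 1) := by omega
  refine ⟨fun k => fFun n α h1 (sigmaFun n i1 hn k), ?_, ?_⟩
  · intro k
    constructor
    · intro hk
      have hσ : sigmaFun n i1 hn k = k := by unfold sigmaFun; rw [if_pos hk]
      show (fFun n α h1 (sigmaFun n i1 hn k)).val < i1 + 1
      rw [hσ]
      show gpre n α k.val < i1 + 1
      by_contra hc
      push_neg at hc
      have hs := gpre_spec n α k.val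
      have hm := Spre_mono n α hc
      omega
    · intro hk hk'
      have hσ : sigmaFun n i1 hn k = ⟨k.val + 1, by omega⟩ := by
        unfold sigmaFun
        rw [if_neg (by omega), dif_pos (by omega)]
      show i1 ≤ (fFun n α h1 (sigmaFun n i1 hn k)).val
      rw [hσ]
      show i1 ≤ gpre n α k.val.succ
      by_contra hc
      push_neg at hc
      have := Nat.findGreatest_is_greatest (P := fun v => Spre n α v ≤ k.val + 1)
        (k := i1) hc (by omega)
      have this : ¬ Spre n α i1 ≤ k.val + 1 := this
      omega
  · conv_lhs => rw [fFun_count n α h1]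
    exact (Equiv.sum_comp (Equiv.ofBijective (sigmaFun n i1 hn)
      ((Finite.injective_iff_bijective).mp (sigma_inj n i1 hn)))
      (fun p => (Pi.single (fFun n α h1 p) 1 : Fin n → ℕ))).symm

theorem stmt9 (n i1 i2 t2 : ℕ) (hn : 3 ≤ n) (hi1a : 2 ≤ i1) (hi1b : i1 ≤ n - 2)
    (ht2 : t2 = i1 + 1) (hi2 : i2 = n - i1 - 1)
    (C : Fin n → Set (Fin n))
    (hC : ∀ k : Fin n,
      C k = if k.val < i1 then {m : Fin n | m.val < i1 + 1}
            else if k.val < n - 1 then {m : Fin n | i1 ≤ m.val}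
            else (Set.univ : Set (Fin n))) :
    {α : Fin n → ℕ | ∃ j : Fin n → Fin n, (∀ k, j k ∈ C k) ∧ α = ∑ k, Pi.single (j k) 1} =
    {α : Fin n → ℕ | ∑ k, α k = n ∧
      ∑ k ∈ Finset.univ.filter (fun m : Fin n => m.val < i1), α k ≤ i1 + 1 ∧
      ∑ k ∈ Finset.univ.filter (fun m : Fin n => i1 + 1 ≤ m.val), α k ≤ n - i1} := by
  have hn2 : i1 + 2 ≤ n := by omega
  ext α
  simp only [Set.mem_setOf_eq]
  constructor
  · rintro ⟨j, hj, rfl⟩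
    have hjlow : ∀ k : Fin n, k.val < i1 → (j k).val < i1 + 1 := by
      intro k hk
      have := hj k
      rw [hC k, if_pos hk] at this
      exact this
    have hjhigh : ∀ k : Fin n, i1 ≤ k.val → k.val < n - 1 → i1 ≤ (j k).val := by
      intro k hk hk'
      have := hj k
      rw [hC k, if_neg (by omega), if_pos hk'] at this
      exact this
    have hpart : ∀ t : Finset (Fin n),
        ∑ m ∈ t, (∑ k, (Pi.single (j k) 1 : Fin n → ℕ)) m =
          (Finset.univ.filter (fun k => j k ∈ t)).card := by
      intro t
      rw [Finset.card_filter]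
      simp only [Finset.sum_apply]
      rw [Finset.sum_comm]
      refine Finset.sum_congr rfl fun k _ => ?_
      rw [Finset.sum_pi_single']
    refine ⟨?_, ?_, ?_⟩
    · have := hpart Finset.univ
      simpa using this
    · rw [hpart]
      calc (Finset.univ.filter fun k =>
              j k ∈ Finset.univ.filter (fun m : Fin n => m.val < i1)).card
          ≤ (Finset.univ.filter (fun k : Fin n => k.val < i1 ∨ n - 1 ≤ k.val)).card := by
            apply Finset.card_le_card
            intro k hk
            simp only [Finset.mem_filter, Finset.mem_univ, true_and] at hk ⊢
            by_contra hc
            push_neg at hc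
            have := hjhigh k hc.1 hc.2
            omega
        _ = i1 + 1 := by
            have he : (Finset.univ.filter (fun k : Fin n => k.val < i1 ∨ n - 1 ≤ k.val)) =
                insert (⟨n - 1, by omega⟩ : Fin n)
                  (Finset.univ.filter (fun k : Fin n => k.val < i1)) := by
              ext k
              have := k.isLt
              simp only [Finset.mem_filter, Finset.mem_univ, true_and, Finset.mem_insert,
                Fin.ext_iff]
              omega
            rw [he, Finset.card_insert_of_notMem (by simp; omega), aux_card_lt n i1 (by omega)]
    · rw [hpart]
      calc (Finset.univ.filter fun k =>
              j k ∈ Finset.univ.filter (fun m : Fin n => i1 + 1 ≤ m.val)).card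
          ≤ (Finset.univ.filter (fun k : Fin n => i1 ≤ k.val)).card := by
            apply Finset.card_le_card
            intro k hk
            simp only [Finset.mem_filter, Finset.mem_univ, true_and] at hk ⊢
            by_contra hc
            push_neg at hc
            have := hjlow k hc
            omega
        _ = n - i1 := aux_card_ge n i1
  · rintro ⟨h1, h2, h3⟩
    obtain ⟨j, hj, hα⟩ := backward n i1 hn2 α h1 h2 h3
    refine ⟨j, ?_, hα⟩
    intro k
    rw [hC k]
    split_ifs with hk hk'
    · exact (hj k).1 hk
    · exact (hj k).2 (by omega) hk'
    · trivial
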